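/- Let G act on a simplicial complex K by exchangeable vertices. Suppose {G·v_i}_{i∈I} spans a simplex in the orbit space K/G, witnessed by representatives u_i ∈ G·v_i with {u_i}_{i∈I} a simplex of K. Then for every other choice of representatives w_i ∈ G·v_i, the set {w_i}_{i∈I} also spans a simplex of K; moreover there exists g ∈ G with g·u_i = w_i and g·w_i = u_i for all i, and g fixing every vertex not among the u_i or w_i. -/

import Mathlib

variable {V : Type*}

def IsComplex (F : Set (Finset V)) : Prop :=
  (∀ s ∈ F, s.Nonempty) ∧ ∀ s ∈ F, ∀ t ⊆ s, t.Nonempty → t ∈ F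

def IsAuto [DecidableEq V] (F : Set (Finset V)) (φ : Equiv.Perm V) : Prop :=
  ∀ s : Finset V, s ∈ F ↔ s.image φ ∈ F

def IsExchange [DecidableEq V] (F : Set (Finset V)) (u v : V) (φ : Equiv.Perm V) : Prop :=
  IsAuto F φ ∧ φ u = v ∧ φ v = u ∧ ∀ w : V, w ≠ u → w ≠ v → φ w = w

def Exchangeable [DecidableEq V] (F : Set (Finset V)) (u v : V) : Prop :=
  ∃ φ : Equiv.Perm V, IsExchange F u v φ

def vertices (F : Set (Finset V)) : Set V := {v | ({v} : Finset V) ∈ F}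

def quotFaces (F : Set (Finset V)) (G : Subgroup (Equiv.Perm V)) : Set (Finset (Set V)) :=
  {S | ∃ s ∈ F, (↑S : Set (Set V)) = (fun v => MulAction.orbit (↥G) v) '' ↑s}

def ActsByExch [DecidableEq V] (F : Set (Finset V)) (G : Subgroup (Equiv.Perm V)) : Prop :=
  ∃ M : Set (Equiv.Perm V), G = Subgroup.closure M ∧
    ∀ φ ∈ M, ∃ u v : V, u ≠ v ∧ IsExchange F u v φ

def fullSubFaces (F : Set (Finset V)) (W : Set V) : Set (Finset V) :=
  {s ∈ F | ↑s ⊆ W}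


section Aux

variable [DecidableEq V]

theorem isAuto_one (F : Set (Finset V)) : IsAuto F 1 := by
  intro s; simp [IsAuto]

theorem isAuto_mul {F : Set (Finset V)} {φ ψ : Equiv.Perm V}
    (hφ : IsAuto F φ) (hψ : IsAuto F ψ) : IsAuto F (φ * ψ) := by
  intro s
  rw [hψ s, hφ (s.image ψ), Finset.image_image]
  rfl

/-- `a` and `b` are either equal or exchangeable via an element of `G`. -/
def ExchR (F : Set (Finset V)) (G : Subgroup (Equiv.Perm V)) (a b : V) : Prop :=
  a = b ∨ ∃ g, g ∈ G ∧ IsExchange F a b g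

theorem exchR_refl (F : Set (Finset V)) (G : Subgroup (Equiv.Perm V)) (a : V) :
    ExchR F G a a := Or.inl rfl

theorem isExchange_symm {F : Set (Finset V)} {a b : V} {g : Equiv.Perm V}
    (h : IsExchange F a b g) : IsExchange F b a g :=
  ⟨h.1, h.2.2.1, h.2.1, fun x h1 h2 => h.2.2.2 x h2 h1⟩

theorem exchR_symm {F : Set (Finset V)} {G : Subgroup (Equiv.Perm V)} {a b : V}
    (h : ExchR F G a b) : ExchR F G b a := by
  rcases h with h | ⟨g, hg, he⟩
  · exact Or.inl h.symm
  · exact Or.inr ⟨g, hg, isExchange_symm he⟩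

theorem exchR_trans {F : Set (Finset V)} {G : Subgroup (Equiv.Perm V)} {a b c : V}
    (h1 : ExchR F G a b) (h2 : ExchR F G b c) : ExchR F G a c := by
  rcases h1 with rfl | ⟨g1, hg1, he1⟩
  · exact h2
  rcases h2 with rfl | ⟨g2, hg2, he2⟩
  · exact Or.inr ⟨g1, hg1, he1⟩
  by_cases hac : a = c
  · exact Or.inl hac
  by_cases hab : a = b
  · subst hab; exact Or.inr ⟨g2, hg2, he2⟩
  by_cases hbc : b = c
  · subst hbc; exact Or.inr ⟨g1, hg1, he1⟩
  refine Or.inr ⟨g1 * g2 * g1, mul_mem (mul_mem hg1 hg2) hg1, ?_⟩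
  have e1a : g1 a = b := he1.2.1
  have e1b : g1 b = a := he1.2.2.1
  have e1 : ∀ x, x ≠ a → x ≠ b → g1 x = x := he1.2.2.2
  have e2b : g2 b = c := he2.2.1
  have e2c : g2 c = b := he2.2.2.1
  have e2 : ∀ x, x ≠ b → x ≠ c → g2 x = x := he2.2.2.2
  refine ⟨isAuto_mul (isAuto_mul he1.1 he2.1) he1.1, ?_, ?_, ?_⟩
  · show g1 (g2 (g1 a)) = c
    rw [e1a, e2b, e1 c (fun h => hac h.symm) (fun h => hbc h.symm)]
  · show g1 (g2 (g1 c)) = a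
    rw [e1 c (fun h => hac h.symm) (fun h => hbc h.symm), e2c, e1b]
  · intro x hxa hxc
    show g1 (g2 (g1 x)) = x
    by_cases hxb : x = b
    · subst hxb
      rw [e1b, e2 a hab (hac), e1a]
    · rw [e1 x hxa hxb, e2 x hxb hxc, e1 x hxa hxb]

theorem exchR_of_mem_G {F : Set (Finset V)} {G : Subgroup (Equiv.Perm V)}
    (hG : ActsByExch F G) : ∀ g ∈ G, ∀ a : V, ExchR F G a (g a) := by
  obtain ⟨M, rfl, hM⟩ := hG
  intro g hg
  induction hg using Subgroup.closure_induction with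
  | mem φ hφ =>
    intro a
    obtain ⟨x, y, hxy, hex⟩ := hM φ hφ
    have hφG : φ ∈ Subgroup.closure M := Subgroup.subset_closure hφ
    by_cases hax : a = x
    · subst hax
      rw [hex.2.1]
      exact Or.inr ⟨φ, hφG, hex⟩
    by_cases hay : a = y
    · subst hay
      rw [hex.2.2.1]
      exact Or.inr ⟨φ, hφG, isExchange_symm hex⟩
    · rw [hex.2.2.2 a hax hay]
      exact exchR_refl _ _ _
  | one => intro a; exact exchR_refl _ _ _
  | mul x y hx hy ihx ihy =>
    intro a
    exact exchR_trans (ihy a) (ihx (y a))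
  | inv x hx ih =>
    intro a
    have := ih (x⁻¹ a)
    rw [show x (x⁻¹ a) = a from Equiv.apply_symm_apply x a] at this
    exact exchR_symm this

end Aux

/-- Let `G` act on `F` by exchangeable vertices, and suppose the distinct orbits
`G·(v i)` span a simplex of `F/G`, witnessed by representatives `u i ∈ G·(v i)` with
`{u i}` a simplex of `F`. Then any other system of representatives `w i ∈ G·(v i)`
also spans a simplex of `F`, and some `g ∈ G` swaps each `u i` with `w i` while fixing
every vertex not among them. -/
theorem representatives_span_simplex [DecidableEq V] (F : Set (Finset V)) (hF : IsComplex F)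
    (G : Subgroup (Equiv.Perm V)) (hG : ActsByExch F G)
    {I : Type*} [Fintype I] (v u w : I → V)
    (hinj : Function.Injective (fun i => MulAction.orbit (↥G) (v i)))
    (hu : ∀ i, u i ∈ MulAction.orbit (↥G) (v i))
    (hw : ∀ i, w i ∈ MulAction.orbit (↥G) (v i))
    (hs : Finset.univ.image u ∈ F) :
    Finset.univ.image w ∈ F ∧
    ∃ g ∈ G, (∀ i, g (u i) = w i ∧ g (w i) = u i) ∧
      ∀ x : V, (∀ i, x ≠ u i ∧ x ≠ w i) → g x = x := by
  classical
  -- orbits of u i and w i coincide with that of v i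
  have horb_u : ∀ i, MulAction.orbit (↥G) (u i) = MulAction.orbit (↥G) (v i) :=
    fun i => MulAction.orbit_eq_iff.mpr (hu i)
  have horb_w : ∀ i, MulAction.orbit (↥G) (w i) = MulAction.orbit (↥G) (v i) :=
    fun i => MulAction.orbit_eq_iff.mpr (hw i)
  -- pairwise disjointness of the pairs {u i, w i}
  have hdisj : ∀ i j : I, i ≠ j → u i ≠ u j ∧ u i ≠ w j ∧ w i ≠ u j ∧ w i ≠ w j := by
    intro i j hij
    have key : ∀ x y : V, MulAction.orbit (↥G) x = MulAction.orbit (↥G) (v i) →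
        MulAction.orbit (↥G) y = MulAction.orbit (↥G) (v j) → x ≠ y := by
      intro x y hx hy hxy
      subst hxy
      exact hij (hinj (show MulAction.orbit (↥G) (v i) = MulAction.orbit (↥G) (v j) from
        hx ▸ hy ▸ rfl))
    exact ⟨key _ _ (horb_u i) (horb_u j), key _ _ (horb_u i) (horb_w j),
      key _ _ (horb_w i) (horb_u j), key _ _ (horb_w i) (horb_w j)⟩
  -- choose an exchanging element for each i
  have hc : ∀ i : I, ∃ g : Equiv.Perm V, g ∈ G ∧ g (u i) = w i ∧ g (w i) = u i ∧
      (∀ x, x ≠ u i → x ≠ w i → g x = x) ∧ IsAuto F g := by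
    intro i
    have hwi : w i ∈ MulAction.orbit (↥G) (u i) := by rw [horb_u i]; exact hw i
    obtain ⟨g0, hg0⟩ := hwi
    have hR : ExchR F G (u i) ((g0 : Equiv.Perm V) (u i)) :=
      exchR_of_mem_G hG (g0 : Equiv.Perm V) g0.2 (u i)
    rw [show ((g0 : Equiv.Perm V) (u i)) = w i from hg0] at hR
    rcases hR with h | ⟨g, hgG, hex⟩
    · exact ⟨1, one_mem G, by simp [h], by simp [h.symm], fun x _ _ => rfl, isAuto_one F⟩
    · exact ⟨g, hgG, hex.2.1, hex.2.2.1, hex.2.2.2, hex.1⟩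
  choose c hcG hcu hcw hcfix hcauto using hc
  -- the big product over a list
  set L : List I := Finset.univ.toList with hL
  set g : Equiv.Perm V := (L.map c).prod with hgdef
  -- general facts about list products
  have hfix : ∀ l : List I, ∀ x : V, (∀ i ∈ l, x ≠ u i ∧ x ≠ w i) →
      ((l.map c).prod : Equiv.Perm V) x = x := by
    intro l
    induction l with
    | nil => intro x _; rfl
    | cons a t ih =>
      intro x hx
      have : ((List.map c (a :: t)).prod : Equiv.Perm V) x
          = c a (((t.map c).prod : Equiv.Perm V) x) := by
        simp [Equiv.Perm.mul_apply]
      rw [this, ih x (fun i hi => hx i (List.mem_cons_of_mem a hi)),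
        hcfix a x (hx a List.mem_cons_self).1 (hx a List.mem_cons_self).2]
  have hswap : ∀ l : List I, l.Nodup → ∀ j ∈ l,
      ((l.map c).prod : Equiv.Perm V) (u j) = w j ∧
      ((l.map c).prod : Equiv.Perm V) (w j) = u j := by
    intro l
    induction l with
    | nil => intro _ j hj; exact absurd hj List.not_mem_nil
    | cons a t ih =>
      intro hnd j hj
      have hnd' : t.Nodup := (List.nodup_cons.mp hnd).2
      have hna : a ∉ t := (List.nodup_cons.mp hnd).1
      have happ : ∀ x : V, ((List.map c (a :: t)).prod : Equiv.Perm V) x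
          = c a (((t.map c).prod : Equiv.Perm V) x) := by
        intro x; simp [Equiv.Perm.mul_apply]
      rcases List.mem_cons.mp hj with rfl | hjt
      · have hfu : ((t.map c).prod : Equiv.Perm V) (u j) = u j :=
          hfix t (u j) (fun i hi => by
            have hij : j ≠ i := fun h => hna (h ▸ hi)
            exact ⟨(hdisj j i hij).1, (hdisj j i hij).2.1⟩)
        have hfw : ((t.map c).prod : Equiv.Perm V) (w j) = w j :=
          hfix t (w j) (fun i hi => by
            have hij : j ≠ i := fun h => hna (h ▸ hi)
            exact ⟨(hdisj j i hij).2.2.1, (hdisj j i hij).2.2.2⟩)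
        rw [happ (u j), happ (w j), hfu, hfw]
        exact ⟨hcu j, hcw j⟩
      · have hja : j ≠ a := fun h => hna (h ▸ hjt)
        have h1 := (ih hnd' j hjt).1
        have h2 := (ih hnd' j hjt).2
        rw [happ (u j), happ (w j), h1, h2]
        constructor
        · exact hcfix a (w j) (hdisj j a hja).2.2.1 (hdisj j a hja).2.2.2
        · exact hcfix a (u j) (hdisj j a hja).1 (hdisj j a hja).2.1
  have hmemL : ∀ i : I, i ∈ L := fun i => by simp [hL, Finset.mem_toList]
  have hswapL : ∀ i : I, g (u i) = w i ∧ g (w i) = u i :=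
    fun i => hswap L (Finset.nodup_toList _) i (hmemL i)
  have hfixL : ∀ x : V, (∀ i, x ≠ u i ∧ x ≠ w i) → g x = x :=
    fun x hx => hfix L x (fun i _ => hx i)
  have hgG : g ∈ G := by
    rw [hgdef]
    have : ∀ l : List I, ((l.map c).prod : Equiv.Perm V) ∈ G := by
      intro l
      induction l with
      | nil => exact one_mem G
      | cons a t ih => simpa using mul_mem (hcG a) ih
    exact this L
  have hgauto : IsAuto F g := by
    rw [hgdef]
    have : ∀ l : List I, IsAuto F ((l.map c).prod : Equiv.Perm V) := by
      intro l
      induction l with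
      | nil => exact isAuto_one F
      | cons a t ih => simpa using isAuto_mul (hcauto a) ih
    exact this L
  refine ⟨?_, g, hgG, hswapL, hfixL⟩
  have h1 : (Finset.univ.image u).image g ∈ F := (hgauto _).mp hs
  have h2 : (Finset.univ.image u).image g = Finset.univ.image w := by
    rw [Finset.image_image]
    apply Finset.image_congr
    intro i _
    exact (hswapL i).1
  rwa [h2] at h1
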